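/- arXiv:1202.1411 — 2 statements merged into one kernel-verified Lean document; each statement's English description precedes it below -/
import Mathlib

section
/- (Local observer convergence) Consider ẋ = Ax + N(x)x with y = Cx, where N is linear and energy preserving, and the observer ẋ̂ = Ax̂ + N(x̂)x̂ − L(y − Cx̂) with L = P⁻¹R. Suppose B_r(d) is invariant for the state x, Y ⊇ B_r(d), there exist α₁, α₂, α₃ > 0 and symmetric P with α₁I ⪯ P ⪯ α₂I and P A_y + A_yᵀ P + RC + CᵀRᵀ ⪯ −α₃ I for every y ∈ Y, and the initial error satisfies ‖x₀ − x̂₀‖₂ < (α₃/(2γα₂))·√(α₁/α₂), where γ = ‖N‖ is the operator norm of N (into the Frobenius norm). If x₀ ∈ B_r(d), then the error e(t) = x(t) − x̂(t) converges to 0 exponentially as t → ∞. -/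
open Matrix

/-- Euclidean norm on `Fin n → ℝ`. -/
noncomputable def eucNorm {n : ℕ} (v : Fin n → ℝ) : ℝ := Real.sqrt (∑ i, v i ^ 2)

/-- Frobenius norm of a square matrix. -/
noncomputable def frobNorm {n : ℕ} (M : Matrix (Fin n) (Fin n) ℝ) : ℝ :=
  Real.sqrt (∑ i, ∑ j, M i j ^ 2)

/-! ### Auxiliary lemmas -/

/-- Euclidean norm on functions on a general fintype. -/
noncomputable def eunorm {ι : Type*} [Fintype ι] (f : ι → ℝ) : ℝ := Real.sqrt (∑ i, f i ^ 2)

lemma eunorm_eq_norm {ι : Type*} [Fintype ι] (f : ι → ℝ) :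
    eunorm f = ‖(WithLp.linearEquiv 2 ℝ (ι → ℝ)).symm f‖ := by
  rw [EuclideanSpace.norm_eq]
  simp [eunorm, Real.norm_eq_abs, sq_abs]

lemma eunorm_nonneg {ι : Type*} [Fintype ι] (f : ι → ℝ) : 0 ≤ eunorm f := Real.sqrt_nonneg _

lemma eunorm_sq {ι : Type*} [Fintype ι] (f : ι → ℝ) : eunorm f ^ 2 = ∑ i, f i ^ 2 :=
  Real.sq_sqrt (by positivity)

lemma abs_le_eunorm {ι : Type*} [Fintype ι] (f : ι → ℝ) (i : ι) : |f i| ≤ eunorm f := by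
  rw [← Real.sqrt_sq_eq_abs]
  exact Real.sqrt_le_sqrt (Finset.single_le_sum (fun j _ => sq_nonneg (f j)) (Finset.mem_univ i))

lemma eunorm_smul {ι : Type*} [Fintype ι] (c : ℝ) (f : ι → ℝ) :
    eunorm (c • f) = |c| * eunorm f := by
  rw [eunorm_eq_norm, eunorm_eq_norm, _root_.map_smul, norm_smul, Real.norm_eq_abs]

lemma eunorm_sum_le {ι κ : Type*} [Fintype ι] (s : Finset κ) (f : κ → ι → ℝ) :
    eunorm (∑ i ∈ s, f i) ≤ ∑ i ∈ s, eunorm (f i) := by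
  simp_rw [eunorm_eq_norm, map_sum]
  exact norm_sum_le _ _

lemma eunorm_pos {ι : Type*} [Fintype ι] {f : ι → ℝ} (hf : f ≠ 0) : 0 < eunorm f := by
  rw [eunorm_eq_norm, norm_pos_iff]
  simpa using hf

lemma eucNorm_eq_eunorm {n : ℕ} (v : Fin n → ℝ) : eucNorm v = eunorm v := rfl

lemma eucNorm_nonneg {n : ℕ} (v : Fin n → ℝ) : 0 ≤ eucNorm v := Real.sqrt_nonneg _

lemma eucNorm_sq {n : ℕ} (v : Fin n → ℝ) : eucNorm v ^ 2 = ∑ i, v i ^ 2 :=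
  eunorm_sq v

lemma abs_le_enorm {n : ℕ} (v : Fin n → ℝ) (i : Fin n) : |v i| ≤ eucNorm v :=
  abs_le_eunorm v i

lemma eucNorm_smul {n : ℕ} (c : ℝ) (v : Fin n → ℝ) : eucNorm (c • v) = |c| * eucNorm v :=
  eunorm_smul c v

lemma eucNorm_pos {n : ℕ} {v : Fin n → ℝ} (hv : v ≠ 0) : 0 < eucNorm v := eunorm_pos hv

lemma frobNorm_eq_eunorm {n : ℕ} (M : Matrix (Fin n) (Fin n) ℝ) :
    frobNorm M = eunorm (fun p : Fin n × Fin n => M p.1 p.2) := by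
  rw [frobNorm, eunorm, Fintype.sum_prod_type]

lemma frobNorm_sq {n : ℕ} (M : Matrix (Fin n) (Fin n) ℝ) :
    frobNorm M ^ 2 = ∑ i, ∑ j, M i j ^ 2 := by
  rw [frobNorm]; exact Real.sq_sqrt (by positivity)

lemma frobNorm_nonneg {n : ℕ} (M : Matrix (Fin n) (Fin n) ℝ) : 0 ≤ frobNorm M :=
  Real.sqrt_nonneg _

lemma frobNorm_smul {n : ℕ} (c : ℝ) (M : Matrix (Fin n) (Fin n) ℝ) :
    frobNorm (c • M) = |c| * frobNorm M := by
  rw [frobNorm_eq_eunorm, frobNorm_eq_eunorm]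
  have : (fun p : Fin n × Fin n => (c • M) p.1 p.2) = c • fun p : Fin n × Fin n => M p.1 p.2 := by
    funext p; simp [Matrix.smul_apply, smul_eq_mul]
  rw [this, eunorm_smul]

lemma frobNorm_sum_le {n : ℕ} {κ : Type*} (s : Finset κ) (f : κ → Matrix (Fin n) (Fin n) ℝ) :
    frobNorm (∑ i ∈ s, f i) ≤ ∑ i ∈ s, frobNorm (f i) := by
  have : (fun p : Fin n × Fin n => (∑ i ∈ s, f i) p.1 p.2)
      = ∑ i ∈ s, fun p : Fin n × Fin n => f i p.1 p.2 := by
    funext p; simp [Matrix.sum_apply]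
  rw [frobNorm_eq_eunorm, this]
  refine (eunorm_sum_le s _).trans ?_
  exact Finset.sum_le_sum fun i _ => le_of_eq (frobNorm_eq_eunorm (f i)).symm

lemma eunorm_mulVec_le {n : ℕ} (M : Matrix (Fin n) (Fin n) ℝ) (v : Fin n → ℝ) :
    eucNorm (M *ᵥ v) ≤ frobNorm M * eucNorm v := by
  have hsq : eucNorm (M *ᵥ v) ^ 2 ≤ (frobNorm M * eucNorm v) ^ 2 := by
    rw [eucNorm_sq, mul_pow, eucNorm_sq, frobNorm_sq, Finset.sum_mul]
    apply Finset.sum_le_sum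
    intro i _
    calc (M *ᵥ v) i ^ 2 = (∑ j, M i j * v j) ^ 2 := rfl
      _ ≤ (∑ j, M i j ^ 2) * ∑ j, v j ^ 2 := Finset.sum_mul_sq_le_sq_mul_sq _ _ _
  exact le_of_pow_le_pow_left₀ two_ne_zero
    (mul_nonneg (frobNorm_nonneg M) (eucNorm_nonneg v)) hsq

lemma dot_symm {n : ℕ} {P : Matrix (Fin n) (Fin n) ℝ} (hPsymm : P.IsSymm) (v w : Fin n → ℝ) :
    v ⬝ᵥ P *ᵥ w = w ⬝ᵥ P *ᵥ v := by
  rw [Matrix.dotProduct_mulVec, ← Matrix.mulVec_transpose, hPsymm]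
  exact dotProduct_comm _ _

lemma quad_cs {n : ℕ} {P : Matrix (Fin n) (Fin n) ℝ} (hPsymm : P.IsSymm)
    (hpos : ∀ u : Fin n → ℝ, 0 ≤ u ⬝ᵥ P *ᵥ u) (v w : Fin n → ℝ) :
    (v ⬝ᵥ P *ᵥ w) ^ 2 ≤ (v ⬝ᵥ P *ᵥ v) * (w ⬝ᵥ P *ᵥ w) := by
  have key : ∀ s : ℝ, 0 ≤ (w ⬝ᵥ P *ᵥ w) * (s * s) + (2 * (v ⬝ᵥ P *ᵥ w)) * s + v ⬝ᵥ P *ᵥ v := by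
    intro s
    have h := hpos (v + s • w)
    have hexp : (v + s • w) ⬝ᵥ P *ᵥ (v + s • w)
        = v ⬝ᵥ P *ᵥ v + s * (v ⬝ᵥ P *ᵥ w) + (s * (w ⬝ᵥ P *ᵥ v) + s * s * (w ⬝ᵥ P *ᵥ w)) := by
      simp [Matrix.mulVec_add, Matrix.mulVec_smul, dotProduct_add, add_dotProduct,
        smul_dotProduct, dotProduct_smul, smul_eq_mul]
      ring
    rw [hexp, dot_symm hPsymm w v] at h
    nlinarith [h]
  have hd := discrim_le_zero key
  rw [discrim] at hd
  nlinarith [hd]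

lemma hasDerivAt_quadForm {n : ℕ} (P : Matrix (Fin n) (Fin n) ℝ) {f g : ℝ → Fin n → ℝ}
    {f' g' : Fin n → ℝ} {t : ℝ} (hf : HasDerivAt f f' t) (hg : HasDerivAt g g' t) :
    HasDerivAt (fun s => f s ⬝ᵥ P *ᵥ g s) (f' ⬝ᵥ P *ᵥ g t + f t ⬝ᵥ P *ᵥ g') t := by
  have hfc := hasDerivAt_pi.mp hf
  have hgc := hasDerivAt_pi.mp hg
  have hinner : ∀ i : Fin n, HasDerivAt (fun s => (P *ᵥ g s) i) ((P *ᵥ g') i) t := by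
    intro i
    have : HasDerivAt (fun s => ∑ j, P i j * g s j) (∑ j, P i j * g' j) t :=
      HasDerivAt.fun_sum (fun j _ => (hgc j).const_mul (P i j))
    simpa [Matrix.mulVec, dotProduct] using this
  have h : HasDerivAt (fun s => ∑ i, f s i * (P *ᵥ g s) i)
      (∑ i, (f' i * (P *ᵥ g t) i + f t i * (P *ᵥ g') i)) t :=
    HasDerivAt.fun_sum (fun i _ => (hfc i).mul (hinner i))
  have heq : (fun s => ∑ i, f s i * (P *ᵥ g s) i) = fun s => f s ⬝ᵥ P *ᵥ g s := by
    funext s; simp [dotProduct]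
  rw [heq] at h
  convert h using 1
  simp [dotProduct, Finset.sum_add_distrib]

lemma frob_N_le {n : ℕ} (N : (Fin n → ℝ) →ₗ[ℝ] Matrix (Fin n) (Fin n) ℝ) (γ : ℝ)
    (hγ : γ = sSup ((fun v : Fin n → ℝ => frobNorm (N v)) '' {v | eucNorm v = 1}))
    (v : Fin n → ℝ) : frobNorm (N v) ≤ γ * eucNorm v := by
  have hBdd : BddAbove ((fun v : Fin n → ℝ => frobNorm (N v)) '' {v | eucNorm v = 1}) := by
    refine ⟨∑ i, frobNorm (N (Pi.single i 1)), ?_⟩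
    rintro _ ⟨u, hu, rfl⟩
    have hu1 : eucNorm u = 1 := hu
    have hdecomp : u = ∑ i, u i • (Pi.single i 1 : Fin n → ℝ) := by
      conv_lhs => rw [← Finset.univ_sum_single u]
      congr 1; funext i
      rw [← Pi.single_smul, smul_eq_mul, mul_one]
    calc frobNorm (N u) = frobNorm (∑ i, u i • N (Pi.single i 1)) := by
          conv_lhs => rw [hdecomp]
          rw [map_sum]
          congr 1
          exact Finset.sum_congr rfl fun i _ => _root_.map_smul N (u i) _
      _ ≤ ∑ i, frobNorm (u i • N (Pi.single i 1)) := frobNorm_sum_le _ _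
      _ = ∑ i, |u i| * frobNorm (N (Pi.single i 1)) := by
          congr 1; funext i; exact frobNorm_smul _ _
      _ ≤ ∑ i, 1 * frobNorm (N (Pi.single i 1)) := by
          apply Finset.sum_le_sum; intro i _
          exact mul_le_mul_of_nonneg_right (hu1 ▸ abs_le_enorm u i) (frobNorm_nonneg _)
      _ = ∑ i, frobNorm (N (Pi.single i 1)) := by simp
  by_cases hv : v = 0
  · subst hv
    simp only [map_zero]
    have h1 : frobNorm (0 : Matrix (Fin n) (Fin n) ℝ) = 0 := by simp [frobNorm]
    have h2 : eucNorm (0 : Fin n → ℝ) = 0 := by simp [eucNorm]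
    rw [h1, h2, mul_zero]
  · have hpos := eucNorm_pos hv
    set u := (eucNorm v)⁻¹ • v with hu
    have hu1 : eucNorm u = 1 := by
      rw [hu, eucNorm_smul, abs_of_pos (inv_pos.mpr hpos), inv_mul_cancel₀ (ne_of_gt hpos)]
    have hmem : frobNorm (N u) ∈ (fun v : Fin n → ℝ => frobNorm (N v)) '' {v | eucNorm v = 1} :=
      ⟨u, hu1, rfl⟩
    have hle : frobNorm (N u) ≤ γ := hγ ▸ le_csSup hBdd hmem
    have hvu : v = eucNorm v • u := by
      rw [hu, smul_smul, mul_inv_cancel₀ (ne_of_gt hpos), one_smul]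
    calc frobNorm (N v) = frobNorm (N (eucNorm v • u)) := by rw [← hvu]
      _ = eucNorm v * frobNorm (N u) := by
          rw [_root_.map_smul, frobNorm_smul, abs_of_pos hpos]
      _ ≤ eucNorm v * γ := mul_le_mul_of_nonneg_left hle (le_of_lt hpos)
      _ = γ * eucNorm v := mul_comm _ _

/-- Local observer convergence: if the state stays in the invariant ball `B_r(d) ⊆ Y`,
`P` satisfies `α₁I ⪯ P ⪯ α₂I` and the LMI `P A_y + A_yᵀ P + RC + CᵀRᵀ ⪯ −α₃ I` on `Y`,
`L = P⁻¹R`, and the initial error is small enough, then the observer error converges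
to `0` exponentially. Here `γ = ‖N‖` is the operator norm of `N` into the Frobenius
norm, and `A_y v = Av + N(v)y + N(y)v`. -/
theorem stmt8 {n p : ℕ} (hn : 0 < n)
    (A : Matrix (Fin n) (Fin n) ℝ) (C : Matrix (Fin p) (Fin n) ℝ)
    (N : (Fin n → ℝ) →ₗ[ℝ] Matrix (Fin n) (Fin n) ℝ)
    (hN : ∀ x : Fin n → ℝ, x ⬝ᵥ (N x).mulVec x = 0)
    (γ : ℝ)
    (hγ : γ = sSup ((fun v : Fin n → ℝ => frobNorm (N v)) '' {v | eucNorm v = 1}))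
    (d : Fin n → ℝ) (r : ℝ) (Y : Set (Fin n → ℝ))
    (hYball : {v : Fin n → ℝ | eucNorm (v - d) ≤ r} ⊆ Y)
    (α₁ α₂ α₃ : ℝ) (hα₁ : 0 < α₁) (hα₂ : 0 < α₂) (hα₃ : 0 < α₃)
    (P : Matrix (Fin n) (Fin n) ℝ) (hPsymm : P.IsSymm)
    (R : Matrix (Fin n) (Fin p) ℝ)
    (hP : ∀ v : Fin n → ℝ,
      α₁ * eucNorm v ^ 2 ≤ v ⬝ᵥ P.mulVec v ∧ v ⬝ᵥ P.mulVec v ≤ α₂ * eucNorm v ^ 2)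
    (hLMI : ∀ y ∈ Y, ∀ v : Fin n → ℝ,
      2 * (v ⬝ᵥ P.mulVec (A.mulVec v + (N v).mulVec y + (N y).mulVec v))
        + 2 * (v ⬝ᵥ R.mulVec (C.mulVec v)) ≤ -α₃ * eucNorm v ^ 2)
    (L : Matrix (Fin n) (Fin p) ℝ) (hL : L = P⁻¹ * R)
    (x xh : ℝ → Fin n → ℝ)
    (hx : ∀ t : ℝ, HasDerivAt x (A.mulVec (x t) + (N (x t)).mulVec (x t)) t)
    (hxh : ∀ t : ℝ, HasDerivAt xh
      (A.mulVec (xh t) + (N (xh t)).mulVec (xh t)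
        - L.mulVec (C.mulVec (x t) - C.mulVec (xh t))) t)
    (hxball : ∀ t : ℝ, 0 ≤ t → eucNorm (x t - d) ≤ r)
    (hinit : eucNorm (x 0 - xh 0) < α₃ / (2 * γ * α₂) * Real.sqrt (α₁ / α₂)) :
    (∃ M β : ℝ, 0 < β ∧ ∀ t : ℝ, 0 ≤ t →
        eucNorm (x t - xh t) ≤ M * Real.exp (-β * t)) ∧
      Filter.Tendsto (fun t => x t - xh t) Filter.atTop (nhds 0) := by
  -- γ must be positive
  have hγpos : 0 < γ := by
    by_contra h
    push_neg at h
    have hfrac : α₃ / (2 * γ * α₂) ≤ 0 := by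
      rcases lt_or_eq_of_le h with h' | h'
      · exact le_of_lt (div_neg_of_pos_of_neg hα₃ (mul_neg_of_neg_of_pos (by linarith only [h']) hα₂))
      · rw [h']; simp
    have : α₃ / (2 * γ * α₂) * Real.sqrt (α₁ / α₂) ≤ 0 :=
      mul_nonpos_of_nonpos_of_nonneg hfrac (Real.sqrt_nonneg _)
    linarith [eucNorm_nonneg (x 0 - xh 0)]
  -- P is positive definite, hence invertible, so P * L = R
  have hPnn : ∀ v : Fin n → ℝ, 0 ≤ v ⬝ᵥ P *ᵥ v := fun v =>
    le_trans (by positivity) (hP v).1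
  have hPL : P * L = R := by
    have hPD : P.PosDef := by
      refine Matrix.PosDef.of_dotProduct_mulVec_pos ?_ ?_
      · rw [Matrix.IsHermitian]
        ext i j
        simpa using congrFun (congrFun hPsymm i) j
      · intro v hv
        have h1 := (hP v).1
        have h2 : 0 < α₁ * eucNorm v ^ 2 := by
          have := eucNorm_pos hv
          positivity
        have : star v = v := by simp
        rw [this]
        exact lt_of_lt_of_le h2 h1
    have hdet : IsUnit P.det := isUnit_iff_ne_zero.mpr (ne_of_gt hPD.det_pos)
    rw [hL, ← Matrix.mul_assoc, Matrix.mul_nonsing_inv P hdet, Matrix.one_mul]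
  -- the error and its derivative
  set e : ℝ → Fin n → ℝ := fun t => x t - xh t with he
  set e' : ℝ → Fin n → ℝ := fun t =>
    A *ᵥ e t + (N (e t)) *ᵥ x t + (N (x t)) *ᵥ e t + L *ᵥ (C *ᵥ e t) - (N (e t)) *ᵥ e t
    with he'
  have hde : ∀ t, HasDerivAt e (e' t) t := by
    intro t
    refine ((hx t).fun_sub (hxh t)).congr_deriv ?_
    simp only [he', he, map_sub, Matrix.mulVec_sub, Matrix.sub_mulVec]
    abel
  set V : ℝ → ℝ := fun t => e t ⬝ᵥ P *ᵥ e t with hV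
  have hdV : ∀ t, HasDerivAt V (2 * (e t ⬝ᵥ P *ᵥ e' t)) t := by
    intro t
    have h := hasDerivAt_quadForm P (hde t) (hde t)
    convert h using 1
    rw [dot_symm hPsymm (e' t) (e t)]
    ring
  have hVc : Continuous V := continuous_iff_continuousAt.mpr fun t => (hdV t).continuousAt
  have hVnn : ∀ t, 0 ≤ V t := fun t => hPnn (e t)
  have hVlow : ∀ t, α₁ * eucNorm (e t) ^ 2 ≤ V t := fun t => (hP (e t)).1
  have hVup : ∀ t, V t ≤ α₂ * eucNorm (e t) ^ 2 := fun t => (hP (e t)).2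
  -- constants
  set b : ℝ := α₃ / (2 * γ * α₂) with hb
  have hbpos : 0 < b := div_pos hα₃ (by positivity)
  set c : ℝ := α₁ * b ^ 2 with hc
  have hV0c : V 0 < c := by
    have h1 : eucNorm (e 0) ^ 2 < (b * Real.sqrt (α₁ / α₂)) ^ 2 :=
      pow_lt_pow_left₀ hinit (eucNorm_nonneg _) two_ne_zero
    have h2 : (b * Real.sqrt (α₁ / α₂)) ^ 2 = b ^ 2 * (α₁ / α₂) := by
      rw [mul_pow, Real.sq_sqrt (by positivity)]
    calc V 0 ≤ α₂ * eucNorm (e 0) ^ 2 := hVup 0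
      _ < α₂ * (b ^ 2 * (α₁ / α₂)) := by
          rw [← h2]; exact mul_lt_mul_of_pos_left h1 hα₂
      _ = α₁ * b ^ 2 := by field_simp
  set m : ℝ := (V 0 + c) / 2 with hm
  have hV0m : V 0 < m := by simp only [hm]; linarith
  have hmc : m < c := by simp only [hm]; linarith
  have hmpos : 0 < m := by have := hVnn 0; simp only [hm]; linarith
  set ρ : ℝ := Real.sqrt (m / α₁) with hρ
  have hρnn : 0 ≤ ρ := Real.sqrt_nonneg _
  have hρb : ρ < b := by
    have h1 : m / α₁ < c / α₁ := by gcongr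
    calc ρ < Real.sqrt (c / α₁) := by
          apply Real.sqrt_lt_sqrt (by positivity) h1
      _ = b := by
          rw [hc]
          rw [show α₁ * b ^ 2 / α₁ = b ^ 2 by field_simp]
          exact Real.sqrt_sq hbpos.le
  set κ : ℝ := α₃ - 2 * γ * α₂ * ρ with hκ
  have hκpos : 0 < κ := by
    have h1 : 2 * γ * α₂ * ρ < 2 * γ * α₂ * b := by
      apply mul_lt_mul_of_pos_left hρb (by positivity)
    have h2 : 2 * γ * α₂ * b = α₃ := by
      rw [hb]; field_simp
    simp only [hκ]; linarith
  set β : ℝ := κ / (2 * α₂) with hβ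
  have hβpos : 0 < β := div_pos hκpos (by positivity)
  -- the key derivative bound
  have hVd : ∀ t, 0 ≤ t → V t ≤ m → 2 * (e t ⬝ᵥ P *ᵥ e' t) ≤ -(2 * β) * V t := by
    intro t ht hVm
    have hxY : x t ∈ Y := hYball (hxball t ht)
    have hee2 : eucNorm (e t) ^ 2 ≤ m / α₁ := by
      rw [le_div_iff₀ hα₁]
      calc eucNorm (e t) ^ 2 * α₁ = α₁ * eucNorm (e t) ^ 2 := mul_comm _ _
        _ ≤ V t := hVlow t
        _ ≤ m := hVm
    have hee : eucNorm (e t) ≤ ρ := by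
      rw [hρ, show eucNorm (e t) = Real.sqrt (eucNorm (e t) ^ 2) from
        (Real.sqrt_sq (eucNorm_nonneg _)).symm]
      exact Real.sqrt_le_sqrt hee2
    -- split the derivative
    have hsplit : e t ⬝ᵥ P *ᵥ e' t
        = (e t ⬝ᵥ P *ᵥ (A *ᵥ e t + (N (e t)) *ᵥ x t + (N (x t)) *ᵥ e t)
            + e t ⬝ᵥ R *ᵥ (C *ᵥ e t))
          - e t ⬝ᵥ P *ᵥ ((N (e t)) *ᵥ e t) := by
      simp only [he']
      rw [show A *ᵥ e t + (N (e t)) *ᵥ x t + (N (x t)) *ᵥ e t + L *ᵥ (C *ᵥ e t)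
          - (N (e t)) *ᵥ e t
          = (A *ᵥ e t + (N (e t)) *ᵥ x t + (N (x t)) *ᵥ e t) + (L *ᵥ (C *ᵥ e t))
            - ((N (e t)) *ᵥ e t) by abel]
      rw [Matrix.mulVec_sub, Matrix.mulVec_add, dotProduct_sub, dotProduct_add]
      congr 2
      rw [Matrix.mulVec_mulVec, hPL]
    have hLMIapp := hLMI (x t) hxY (e t)
    -- bound on the nonlinear term
    have hquad : |e t ⬝ᵥ P *ᵥ ((N (e t)) *ᵥ e t)| ≤ α₂ * eucNorm (e t) * eucNorm ((N (e t)) *ᵥ e t) := by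
      have hcs := quad_cs hPsymm hPnn (e t) ((N (e t)) *ᵥ e t)
      have h1 : (e t ⬝ᵥ P *ᵥ ((N (e t)) *ᵥ e t)) ^ 2
          ≤ (α₂ * eucNorm (e t) * eucNorm ((N (e t)) *ᵥ e t)) ^ 2 := by
        calc (e t ⬝ᵥ P *ᵥ ((N (e t)) *ᵥ e t)) ^ 2
            ≤ (e t ⬝ᵥ P *ᵥ e t) * ((N (e t)) *ᵥ e t ⬝ᵥ P *ᵥ ((N (e t)) *ᵥ e t)) := hcs
          _ ≤ (α₂ * eucNorm (e t) ^ 2) * (α₂ * eucNorm ((N (e t)) *ᵥ e t) ^ 2) := by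
              apply mul_le_mul (hP _).2 (hP _).2 (hPnn _) (by positivity)
          _ = (α₂ * eucNorm (e t) * eucNorm ((N (e t)) *ᵥ e t)) ^ 2 := by ring
      rw [← Real.sqrt_sq_eq_abs]
      calc Real.sqrt ((e t ⬝ᵥ P *ᵥ ((N (e t)) *ᵥ e t)) ^ 2)
          ≤ Real.sqrt ((α₂ * eucNorm (e t) * eucNorm ((N (e t)) *ᵥ e t)) ^ 2) :=
            Real.sqrt_le_sqrt h1
        _ = α₂ * eucNorm (e t) * eucNorm ((N (e t)) *ᵥ e t) := Real.sqrt_sq (mul_nonneg (mul_nonneg hα₂.le (eucNorm_nonneg _)) (eucNorm_nonneg _))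
    have hNee : eucNorm ((N (e t)) *ᵥ e t) ≤ γ * eucNorm (e t) * eucNorm (e t) := by
      calc eucNorm ((N (e t)) *ᵥ e t) ≤ frobNorm (N (e t)) * eucNorm (e t) :=
            eunorm_mulVec_le _ _
        _ ≤ (γ * eucNorm (e t)) * eucNorm (e t) :=
            mul_le_mul_of_nonneg_right (frob_N_le N γ hγ (e t)) (eucNorm_nonneg _)
        _ = γ * eucNorm (e t) * eucNorm (e t) := rfl
    -- put it together
    have hEnn : 0 ≤ eucNorm ((N (e t)) *ᵥ e t) := eucNorm_nonneg _
    have hmain : 2 * (e t ⬝ᵥ P *ᵥ e' t) ≤ -κ * eucNorm (e t) ^ 2 := by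
      rw [hsplit]
      generalize hXg : e t ⬝ᵥ P *ᵥ (A *ᵥ e t + (N (e t)) *ᵥ x t + (N (x t)) *ᵥ e t) = X
        at hLMIapp ⊢
      generalize hYg : e t ⬝ᵥ R *ᵥ (C *ᵥ e t) = Yv at hLMIapp ⊢
      generalize hZg : e t ⬝ᵥ P *ᵥ ((N (e t)) *ᵥ e t) = Z at hquad ⊢
      generalize hEg : eucNorm ((N (e t)) *ᵥ e t) = En at hquad hNee hEnn
      generalize hsg : eucNorm (e t) = s at hLMIapp hquad hNee hee ⊢
      have hsnn : 0 ≤ s := hsg ▸ eucNorm_nonneg _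
      have habs := abs_le.mp hquad
      have hstep1 : -(2:ℝ) * Z ≤ 2 * (α₂ * s) * En := by linarith only [habs.1]
      have hstep2 : (2:ℝ) * (α₂ * s) * En ≤ 2 * (α₂ * s) * (γ * s * s) :=
        mul_le_mul_of_nonneg_left hNee
          (mul_nonneg (by norm_num) (mul_nonneg hα₂.le hsnn))
      have hstep3 : (2:ℝ) * (α₂ * s) * (γ * s * s) ≤ 2 * γ * α₂ * ρ * s ^ 2 := by
        calc (2:ℝ) * (α₂ * s) * (γ * s * s) = 2 * γ * α₂ * s ^ 2 * s := by ring
          _ ≤ 2 * γ * α₂ * s ^ 2 * ρ := mul_le_mul_of_nonneg_left hee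
              (mul_nonneg (mul_nonneg (mul_nonneg (by norm_num) hγpos.le) hα₂.le) (sq_nonneg s))
          _ = 2 * γ * α₂ * ρ * s ^ 2 := by ring
      simp only [hκ]
      linarith only [hLMIapp, hstep1, hstep2, hstep3]
    have hV2 : V t / α₂ ≤ eucNorm (e t) ^ 2 := by
      rw [div_le_iff₀ hα₂]
      calc V t ≤ α₂ * eucNorm (e t) ^ 2 := hVup t
        _ = eucNorm (e t) ^ 2 * α₂ := mul_comm _ _
    calc 2 * (e t ⬝ᵥ P *ᵥ e' t) ≤ -κ * eucNorm (e t) ^ 2 := hmain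
      _ ≤ -κ * (V t / α₂) := mul_le_mul_of_nonpos_left hV2 (neg_nonpos.mpr hκpos.le)
      _ = -(2 * β) * V t := by rw [hβ]; field_simp
  -- bootstrap: V stays ≤ m on [0, ∞)
  have hVle : ∀ t, 0 ≤ t → V t ≤ m := by
    by_contra hcon
    push_neg at hcon
    obtain ⟨t₁, ht₁, hVt₁⟩ := hcon
    set S : Set ℝ := {t | 0 ≤ t ∧ m ≤ V t} with hS
    have hSne : S.Nonempty := ⟨t₁, ht₁, hVt₁.le⟩
    have hScl : IsClosed S := by
      have : S = {t | 0 ≤ t} ∩ {t | m ≤ V t} := rfl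
      rw [this]
      exact isClosed_Ici.inter (isClosed_le continuous_const hVc)
    have hSbd : BddBelow S := ⟨0, fun u hu => hu.1⟩
    set s := sInf S with hs
    have hsmem : s ∈ S := hScl.csInf_mem hSne hSbd
    have hs0 : 0 < s := by
      rcases lt_or_eq_of_le hsmem.1 with h | h
      · exact h
      · exfalso; have := hsmem.2; rw [← h] at this; linarith
    have hlt : ∀ u, 0 ≤ u → u < s → V u < m := by
      intro u hu hus
      by_contra h
      push_neg at h
      exact absurd (csInf_le hSbd ⟨hu, h⟩) (not_le.mpr hus)
    have hanti : AntitoneOn V (Set.Icc 0 s) := by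
      apply antitoneOn_of_deriv_nonpos (convex_Icc 0 s) (hVc.continuousOn)
      · intro u _
        exact (hdV u).differentiableAt.differentiableWithinAt
      · intro u hu
        rw [interior_Icc] at hu
        rw [(hdV u).deriv]
        have hVu : V u ≤ m := (hlt u hu.1.le hu.2).le
        have hd1 := hVd u hu.1.le hVu
        have hd2 : -(2 * β) * V u ≤ 0 :=
          mul_nonpos_of_nonpos_of_nonneg
            (neg_nonpos.mpr (mul_nonneg (by norm_num) hβpos.le)) (hVnn u)
        linarith only [hd1, hd2]
    have : V s ≤ V 0 := hanti (Set.left_mem_Icc.mpr hs0.le) ⟨hs0.le, le_refl s⟩ hs0.le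
    linarith [hsmem.2, hV0m]
  -- Grönwall: G t = exp(2βt) V t is antitone on [0, ∞)
  set G : ℝ → ℝ := fun t => Real.exp (2 * β * t) * V t with hG
  have hdG : ∀ t, HasDerivAt G
      (2 * β * Real.exp (2 * β * t) * V t + Real.exp (2 * β * t) * (2 * (e t ⬝ᵥ P *ᵥ e' t))) t := by
    intro t
    have h1 : HasDerivAt (fun u => Real.exp (2 * β * u)) (2 * β * Real.exp (2 * β * t)) t := by
      have := ((hasDerivAt_id t).const_mul (2 * β)).exp
      simpa [mul_comm] using this
    exact h1.mul (hdV t)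
  have hGanti : AntitoneOn G (Set.Ici 0) := by
    apply antitoneOn_of_deriv_nonpos (convex_Ici 0)
    · exact (Continuous.mul (Real.continuous_exp.comp (continuous_const.mul continuous_id)) hVc).continuousOn
    · intro u _
      exact (hdG u).differentiableAt.differentiableWithinAt
    · intro u hu
      rw [interior_Ici] at hu
      rw [(hdG u).deriv]
      have hb1 := hVd u (le_of_lt hu) (hVle u (le_of_lt hu))
      have he1 := Real.exp_pos (2 * β * u)
      have h2 : 2 * β * V u + 2 * (e u ⬝ᵥ P *ᵥ e' u) ≤ 0 := by linarith only [hb1]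
      calc 2 * β * Real.exp (2 * β * u) * V u
            + Real.exp (2 * β * u) * (2 * (e u ⬝ᵥ P *ᵥ e' u))
          = Real.exp (2 * β * u) * (2 * β * V u + 2 * (e u ⬝ᵥ P *ᵥ e' u)) := by ring
        _ ≤ Real.exp (2 * β * u) * 0 := mul_le_mul_of_nonneg_left h2 he1.le
        _ = 0 := mul_zero _
  have hGle : ∀ t, 0 ≤ t → V t ≤ V 0 * Real.exp (-(2 * β) * t) := by
    intro t ht
    have h1 : G t ≤ G 0 := hGanti (Set.mem_Ici.mpr le_rfl) (Set.mem_Ici.mpr ht) ht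
    have h2 : Real.exp (2 * β * t) * V t ≤ V 0 := by
      have hG0 : G 0 = V 0 := by simp [hG]
      rw [← hG0]; exact h1
    have hid : Real.exp (-(2 * β) * t) * Real.exp (2 * β * t) = 1 := by
      rw [← Real.exp_add]
      norm_num
    have h3 := mul_le_mul_of_nonneg_left h2 (Real.exp_pos (-(2 * β) * t)).le
    calc V t = (Real.exp (-(2 * β) * t) * Real.exp (2 * β * t)) * V t := by
          rw [hid, one_mul]
      _ ≤ Real.exp (-(2 * β) * t) * V 0 := by rw [mul_assoc]; exact h3
      _ = V 0 * Real.exp (-(2 * β) * t) := mul_comm _ _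
  -- final bounds
  have hMdef : 0 ≤ Real.sqrt (V 0 / α₁) := Real.sqrt_nonneg _
  have hfinal : ∀ t : ℝ, 0 ≤ t →
      eucNorm (x t - xh t) ≤ Real.sqrt (V 0 / α₁) * Real.exp (-β * t) := by
    intro t ht
    have hRHSnn : 0 ≤ Real.sqrt (V 0 / α₁) * Real.exp (-β * t) := by positivity
    have hexp2 : Real.exp (-β * t) ^ 2 = Real.exp (-(2 * β) * t) := by
      rw [sq, ← Real.exp_add]
      ring_nf
    have h1 : eucNorm (e t) ^ 2 ≤ (Real.sqrt (V 0 / α₁) * Real.exp (-β * t)) ^ 2 := by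
      rw [mul_pow, Real.sq_sqrt (div_nonneg (hVnn 0) hα₁.le), hexp2]
      have h2 : α₁ * eucNorm (e t) ^ 2 ≤ V 0 * Real.exp (-(2 * β) * t) :=
        le_trans (hVlow t) (hGle t ht)
      rw [div_mul_eq_mul_div, le_div_iff₀ hα₁]
      linarith
    have : eucNorm (e t) ≤ Real.sqrt (V 0 / α₁) * Real.exp (-β * t) :=
      le_of_pow_le_pow_left₀ two_ne_zero hRHSnn h1
    exact this
  refine ⟨⟨Real.sqrt (V 0 / α₁), β, hβpos, hfinal⟩, ?_⟩
  have hexp0 : Filter.Tendsto (fun t : ℝ => Real.sqrt (V 0 / α₁) * Real.exp (-β * t))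
      Filter.atTop (nhds 0) := by
    have h1 : Filter.Tendsto (fun t : ℝ => -β * t) Filter.atTop Filter.atBot :=
      (Filter.tendsto_const_mul_atBot_of_neg (neg_lt_zero.mpr hβpos)).mpr Filter.tendsto_id
    have h2 := Real.tendsto_exp_atBot.comp h1
    have h3 := h2.const_mul (Real.sqrt (V 0 / α₁))
    simpa using h3
  apply squeeze_zero_norm' ?_ hexp0
  filter_upwards [Filter.eventually_ge_atTop (0:ℝ)] with t ht
  have hnorm : ‖x t - xh t‖ ≤ eucNorm (x t - xh t) := by
    rw [pi_norm_le_iff_of_nonneg (eucNorm_nonneg _)]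
    intro i
    rw [Real.norm_eq_abs]
    exact abs_le_enorm _ i
  exact le_trans hnorm (hfinal t ht)
end

section
/- Suppose B_r(d) is invariant for ẋ = Ax + N(x)x and x₀ ∈ B_r(d), where N is linear and energy preserving. Consider the observer ẋ̂ = Ax̂ + N(x̂)x̂ − L(Cx − Cx̂). If there exist d̂ ∈ ℝⁿ and α > 0 such that vᵀ(A_{d̂} + LC)v ≤ −α‖v‖₂² for all v, then B_{r̂}(d̂) is invariant for the observer dynamics for any r̂ ≥ (1/α)·sup_{v ∈ B_r(d−d̂)} ‖LCv − Ad̂ − N(d̂)d̂‖₂. -/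
open Matrix

/-- Euclidean norm on `Fin n → ℝ`. -/
noncomputable def enorm₂ {n : ℕ} (v : Fin n → ℝ) : ℝ := Real.sqrt (∑ i, v i ^ 2)

lemma enorm_nonneg' {n : ℕ} (v : Fin n → ℝ) : 0 ≤ enorm₂ v := Real.sqrt_nonneg _

lemma enorm_sq' {n : ℕ} (v : Fin n → ℝ) : enorm₂ v ^ 2 = ∑ i, v i ^ 2 :=
  Real.sq_sqrt (Finset.sum_nonneg fun _ _ => sq_nonneg _)

lemma dot_le_enorm' {n : ℕ} (v g : Fin n → ℝ) : v ⬝ᵥ g ≤ enorm₂ v * enorm₂ g := by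
  have h : (v ⬝ᵥ g) ^ 2 ≤ (enorm₂ v * enorm₂ g) ^ 2 := by
    rw [mul_pow, enorm_sq', enorm_sq']; exact Finset.sum_mul_sq_le_sq_mul_sq Finset.univ v g
  nlinarith [mul_nonneg (enorm_nonneg' v) (enorm_nonneg' g)]

lemma enorm_neg' {n : ℕ} (v : Fin n → ℝ) : enorm₂ (-v) = enorm₂ v := by
  simp [enorm₂]

/-- Observer trapping set: if the state trajectory stays in `B_r(d)` and
`A_{d̂} + LC + αI ⪯ 0`, then `B_{r̂}(d̂)` is invariant for the observer dynamics,
for any `r̂` with `α r̂ ≥ sup_{v ∈ B_r(d−d̂)} ‖LCv − Ad̂ − N(d̂)d̂‖₂`. -/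
theorem stmt13 {n p : ℕ}
    (A : Matrix (Fin n) (Fin n) ℝ) (C : Matrix (Fin p) (Fin n) ℝ)
    (L : Matrix (Fin n) (Fin p) ℝ)
    (N : (Fin n → ℝ) →ₗ[ℝ] Matrix (Fin n) (Fin n) ℝ)
    (hN : ∀ x : Fin n → ℝ, x ⬝ᵥ (N x).mulVec x = 0)
    (d dh : Fin n → ℝ) (r α rh : ℝ) (hα : 0 < α)
    (hAdh : ∀ v : Fin n → ℝ,
      v ⬝ᵥ (A.mulVec v + (N v).mulVec dh + (N dh).mulVec v
        + L.mulVec (C.mulVec v)) ≤ -α * enorm₂ v ^ 2)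
    (hrh : ∀ v : Fin n → ℝ, enorm₂ (v - (d - dh)) ≤ r →
      enorm₂ (L.mulVec (C.mulVec v) - A.mulVec dh - (N dh).mulVec dh) ≤ α * rh)
    (x xh : ℝ → Fin n → ℝ)
    (hx : ∀ t : ℝ, HasDerivAt x (A.mulVec (x t) + (N (x t)).mulVec (x t)) t)
    (hxball : ∀ t : ℝ, 0 ≤ t → enorm₂ (x t - d) ≤ r)
    (hxh : ∀ t : ℝ, HasDerivAt xh
      (A.mulVec (xh t) + (N (xh t)).mulVec (xh t)
        - L.mulVec (C.mulVec (x t) - C.mulVec (xh t))) t) :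
    ∀ t₀ t : ℝ, 0 ≤ t₀ → t₀ ≤ t → enorm₂ (xh t₀ - dh) ≤ rh →
      enorm₂ (xh t - dh) ≤ rh := by
  intro t₀ t ht₀ htt₀ h0
  have rh0 : 0 ≤ rh := le_trans (enorm_nonneg' _) h0
  -- the observer vector field
  set w : ℝ → Fin n → ℝ := fun s =>
    A.mulVec (xh s) + (N (xh s)).mulVec (xh s)
      - L.mulVec (C.mulVec (x s) - C.mulVec (xh s)) with hw
  -- Key pointwise dissipation inequality
  have key : ∀ s : ℝ, 0 ≤ s →
      (xh s - dh) ⬝ᵥ w s ≤ -(α/2) * (∑ i, (xh s i - dh i) ^ 2) + (α/2) * rh ^ 2 := by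
    intro s hs
    set v : Fin n → ℝ := xh s - dh with hv
    have hxv : xh s = v + dh := by simp [hv]
    set g : Fin n → ℝ :=
      L.mulVec (C.mulVec (x s - dh)) - A.mulVec dh - (N dh).mulVec dh with hg
    have hgnorm : enorm₂ g ≤ α * rh := by
      apply hrh
      have : x s - dh - (d - dh) = x s - d := by abel
      rw [this]; exact hxball s hs
    have hdecomp : w s =
        (A.mulVec v + (N v).mulVec dh + (N dh).mulVec v + L.mulVec (C.mulVec v))
          + (N v).mulVec v - g := by
      rw [hw, hg]
      simp only [hxv, Matrix.mulVec_add, Matrix.mulVec_sub, map_add, Matrix.add_mulVec]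
      abel
    have hdot : v ⬝ᵥ w s =
        v ⬝ᵥ (A.mulVec v + (N v).mulVec dh + (N dh).mulVec v + L.mulVec (C.mulVec v))
          + v ⬝ᵥ (N v).mulVec v + v ⬝ᵥ (-g) := by
      rw [hdecomp]
      simp [dotProduct_add, dotProduct_sub, dotProduct_neg, sub_eq_add_neg]
    have h1 := hAdh v
    have h2 := hN v
    have h3 : v ⬝ᵥ (-g) ≤ enorm₂ v * (α * rh) := by
      calc v ⬝ᵥ (-g) ≤ enorm₂ v * enorm₂ (-g) := dot_le_enorm' v (-g)
        _ = enorm₂ v * enorm₂ g := by rw [enorm_neg']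
        _ ≤ enorm₂ v * (α * rh) := mul_le_mul_of_nonneg_left hgnorm (enorm_nonneg' v)
    have hE : (∑ i, (xh s i - dh i) ^ 2) = enorm₂ v ^ 2 := by
      rw [enorm_sq']; simp [hv]
    rw [hE]
    have hv0 := enorm_nonneg' v
    calc v ⬝ᵥ w s ≤ -α * enorm₂ v ^ 2 + 0 + enorm₂ v * (α * rh) := by
          rw [hdot]; gcongr <;> simp [h2, h1, h3]
      _ ≤ -(α/2) * enorm₂ v ^ 2 + (α/2) * rh ^ 2 := by nlinarith [sq_nonneg (enorm₂ v - rh)]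
  -- derivative of the squared error
  have hD : ∀ s : ℝ, HasDerivAt (fun u => ∑ i, (xh u i - dh i) ^ 2)
      (2 * ((xh s - dh) ⬝ᵥ w s)) s := by
    intro s
    have hcomp : ∀ i, HasDerivAt (fun u => xh u i) (w s i) s := by
      intro i
      exact (ContinuousLinearMap.proj (R := ℝ) (φ := fun _ : Fin n => ℝ)
        i).hasFDerivAt.comp_hasDerivAt s (hxh s)
    have : HasDerivAt (fun u => ∑ i, (xh u i - dh i) ^ 2)
        (∑ i, 2 * (xh s i - dh i) * w s i) s := by
      apply HasDerivAt.fun_sum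
      intro i _
      have := ((hcomp i).sub_const (dh i)).fun_pow 2
      simpa [mul_comm, mul_assoc, mul_left_comm] using this
    convert this using 1
    simp only [dotProduct, Finset.mul_sum, Pi.sub_apply]
    exact Finset.sum_congr rfl fun i _ => by ring
  -- the Lyapunov-type function
  set F : ℝ → ℝ := fun u => ((∑ i, (xh u i - dh i) ^ 2) - rh ^ 2) * Real.exp (α * u)
    with hF
  have hFderiv : ∀ s : ℝ, HasDerivAt F
      (2 * ((xh s - dh) ⬝ᵥ w s) * Real.exp (α * s)
        + ((∑ i, (xh s i - dh i) ^ 2) - rh ^ 2) * (Real.exp (α * s) * α)) s := by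
    intro s
    have hexp : HasDerivAt (fun u => Real.exp (α * u)) (Real.exp (α * s) * α) s := by
      have := ((hasDerivAt_id s).const_mul α).exp
      simpa [mul_comm] using this
    exact ((hD s).sub_const (rh ^ 2)).mul hexp
  have hanti : AntitoneOn F (Set.Icc t₀ t) := by
    apply antitoneOn_of_deriv_nonpos (convex_Icc t₀ t)
    · exact fun s _ => ((hFderiv s).differentiableAt).continuousAt.continuousWithinAt
    · exact fun s _ => ((hFderiv s).differentiableAt).differentiableWithinAt
    · intro s hs
      rw [interior_Icc] at hs
      have hs0 : 0 ≤ s := le_trans ht₀ hs.1.le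
      rw [(hFderiv s).deriv]
      have hk := key s hs0
      have hep := Real.exp_pos (α * s)
      nlinarith [mul_le_mul_of_nonneg_right hk hep.le]
  have hFt : F t ≤ F t₀ :=
    hanti (Set.mem_Icc.mpr ⟨le_refl t₀, htt₀⟩) (Set.mem_Icc.mpr ⟨htt₀, le_refl t⟩) htt₀
  have hFt₀ : F t₀ ≤ 0 := by
    have hD0 : (∑ i, (xh t₀ i - dh i) ^ 2) ≤ rh ^ 2 := by
      have : enorm₂ (xh t₀ - dh) ^ 2 ≤ rh ^ 2 :=
        pow_le_pow_left₀ (enorm_nonneg' _) h0 2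
      rw [enorm_sq'] at this
      simpa using this
    exact mul_nonpos_of_nonpos_of_nonneg (by linarith) (Real.exp_pos _).le
  have hDt : (∑ i, (xh t i - dh i) ^ 2) ≤ rh ^ 2 := by
    have hFt0 : (∑ i, (xh t i - dh i) ^ 2 - rh ^ 2) * Real.exp (α * t) ≤ 0 :=
      le_trans hFt hFt₀
    have hep := Real.exp_pos (α * t)
    nlinarith [hFt0, hep]
  have : enorm₂ (xh t - dh) ≤ Real.sqrt (rh ^ 2) := by
    rw [enorm₂]
    apply Real.sqrt_le_sqrt
    simpa using hDt
  rwa [Real.sqrt_sq rh0] at this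
end
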